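/- For every integral flow f on G there exist |f| unit path flows on G, denoted f₁, …, f_{|f|}, such that each f_i is a subflow of f, and the sum f₁ ⊕ ⋯ ⊕ f_{|f|} is a subflow of f. -/

import Mathlib

variable {V : Type*} [Fintype V] [DecidableEq V]

/-- The in-edges of a vertex `v` in the edge set `E`. -/
def inEdges (E : Finset (V × V)) (v : V) : Finset (V × V) := E.filter fun e => e.2 = v

/-- The out-edges of a vertex `v` in the edge set `E`. -/
def outEdges (E : Finset (V × V)) (v : V) : Finset (V × V) := E.filter fun e => e.1 = v

/-- A flow on the directed graph `(V, E)` with sources `X` and sinks `Z`: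
a non-negative function on the edges (encoded as a total function vanishing off `E`)
satisfying conservation at every vertex outside `X ∪ Z`. -/
def IsFlow (E : Finset (V × V)) (X Z : Finset V) (f : V × V → ℝ) : Prop :=
  (∀ e ∈ E, 0 ≤ f e) ∧ (∀ e ∉ E, f e = 0) ∧
    ∀ v : V, v ∉ X → v ∉ Z → ∑ e ∈ inEdges E v, f e = ∑ e ∈ outEdges E v, f e

/-- The value of a flow: the total flow out of the sources. -/
def flowValue (E : Finset (V × V)) (X : Finset V) (f : V × V → ℝ) : ℝ :=
  ∑ x ∈ X, ∑ e ∈ outEdges E x, f e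

/-- An `(X, Z)`-path: a directed path in `(V, E)` from a vertex of `X` to a vertex of `Z`. -/
def IsXZPath (E : Finset (V × V)) (X Z : Finset V) (p : List V) : Prop :=
  ∃ h : p ≠ [], p.head h ∈ X ∧ p.getLast h ∈ Z ∧ p.Nodup ∧
    List.Chain' (fun a b => (a, b) ∈ E) p

/-- A path flow: a flow that is positive on all edges of some `(X, Z)`-path
and zero on all other edges. -/
def IsPathFlow (E : Finset (V × V)) (X Z : Finset V) (f : V × V → ℝ) : Prop :=
  IsFlow E X Z f ∧ ∃ p : List V, IsXZPath E X Z p ∧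
    (∀ e ∈ p.zip p.tail, 0 < f e) ∧ ∀ e ∉ p.zip p.tail, f e = 0

/-- A unit path flow: a path flow of value 1. -/
def IsUnitPathFlow (E : Finset (V × V)) (X Z : Finset V) (f : V × V → ℝ) : Prop :=
  IsPathFlow E X Z f ∧ flowValue E X f = 1

section ListAux
variable {α : Type*}

lemma aux_not_nodup_split : ∀ {l : List α}, ¬ l.Nodup →
    ∃ (x : α) (l₁ l₂ l₃ : List α), l = l₁ ++ x :: (l₂ ++ x :: l₃) := by
  intro l
  induction l with
  | nil => intro h; exact absurd List.nodup_nil h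
  | cons a t ih =>
    intro h
    by_cases ha : a ∈ t
    · obtain ⟨l₂, l₃, rfl⟩ := List.append_of_mem ha
      exact ⟨a, [], l₂, l₃, rfl⟩
    · have : ¬ t.Nodup := fun hn => h (List.nodup_cons.mpr ⟨ha, hn⟩)
      obtain ⟨x, l₁, l₂, l₃, rfl⟩ := ih this
      exact ⟨x, a :: l₁, l₂, l₃, rfl⟩

lemma aux_shortcut (r : α → α → Prop) : ∀ (n : ℕ) (l : List α), l.length ≤ n →
    List.Chain' r l → ∃ l' : List α, List.Chain' r l' ∧ l'.Nodup ∧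
      l'.head? = l.head? ∧ l'.getLast? = l.getLast? := by
  intro n
  induction n with
  | zero =>
    intro l hl _
    have : l = [] := List.length_eq_zero_iff.mp (Nat.le_zero.mp hl)
    exact ⟨l, by rw [this]; exact List.IsChain.nil, by simp [this], rfl, rfl⟩
  | succ n ih =>
    intro l hl hc
    by_cases hd : l.Nodup
    · exact ⟨l, hc, hd, rfl, rfl⟩
    · obtain ⟨x, l₁, l₂, l₃, rfl⟩ := aux_not_nodup_split hd
      have hre : l₁ ++ x :: (l₂ ++ x :: l₃) = (l₁ ++ (x :: l₂)) ++ (x :: l₃) := by simp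
      rw [hre] at hc
      change List.IsChain r _ at hc
      rw [List.isChain_append] at hc
      obtain ⟨hc1, hc2, hlink⟩ := hc
      rw [List.isChain_append] at hc1
      have hcnew : List.Chain' r (l₁ ++ (x :: l₃)) := by
        change List.IsChain r _
        rw [List.isChain_append]
        refine ⟨hc1.1, hc2, ?_⟩
        intro a ha b hb
        simp only [List.head?_cons, Option.mem_def, Option.some.injEq] at hb
        subst hb
        rcases List.eq_nil_or_concat l₁ with rfl | ⟨l₁', y, rfl⟩
        · simp at ha
        · exact hc1.2.2 a ha x (by simp)
      have hlen : (l₁ ++ (x :: l₃)).length ≤ n := by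
        simp only [List.length_append, List.length_cons] at hl ⊢
        omega
      obtain ⟨l', c', d', hh, hg⟩ := ih _ hlen hcnew
      refine ⟨l', c', d', ?_, ?_⟩
      · rw [hh]
        rcases l₁ with _ | ⟨a, t⟩ <;> simp
      · rw [hg, hre]
        simp only [List.getLast?_append, List.getLast?_cons_cons]
        cases l₃ with
        | nil => simp
        | cons b t =>
          rcases e : (b :: t).getLast? with _ | c
          · simp at e
          · simp [e]

lemma map_fst_zip_tail : ∀ (l : List α), (l.zip l.tail).map Prod.fst = l.dropLast
  | [] => rfl
  | [_] => rfl
  | a :: b :: t => by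
    simpa using congrArg (List.cons a) (map_fst_zip_tail (b :: t))

lemma map_snd_zip_tail (l : List α) : (l.zip l.tail).map Prod.snd = l.tail :=
  List.map_snd_zip (by simp [List.length_tail])

lemma chain'_zip_tail {r : α → α → Prop} : ∀ {l : List α}, List.Chain' r l →
    ∀ e ∈ l.zip l.tail, r e.1 e.2
  | [], _, e, he => by simp at he
  | [_], _, e, he => by simp at he
  | a :: b :: t, hc, e, he => by
    rw [List.tail_cons, List.zip_cons_cons, List.mem_cons] at he
    rcases he with rfl | he
    · exact (List.isChain_cons_cons.mp hc).1
    · exact chain'_zip_tail (List.isChain_cons_cons.mp hc).2 e he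

end ListAux

lemma indicator_sum_core (s : Finset (V × V)) (zp : List (V × V)) (pr : V × V → V)
    (hnd : (zp.map pr).Nodup) (hsub : ∀ e ∈ zp, e ∈ s) (v : V) :
    ∑ e ∈ s.filter (fun e => pr e = v), (if e ∈ zp then (1 : ℕ) else 0)
      = if v ∈ zp.map pr then 1 else 0 := by
  classical
  split_ifs with hv
  · obtain ⟨e₀, he₀, rfl⟩ := List.mem_map.mp hv
    have key : ∀ e ∈ s.filter (fun e => pr e = pr e₀),
        (if e ∈ zp then (1 : ℕ) else 0) = if e = e₀ then 1 else 0 := by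
      intro e he
      rw [Finset.mem_filter] at he
      congr 1
      simp only [eq_iff_iff]
      constructor
      · intro hez
        exact List.inj_on_of_nodup_map hnd hez he₀ he.2
      · rintro rfl; exact he₀
    have hm : e₀ ∈ s.filter (fun e => pr e = pr e₀) :=
      Finset.mem_filter.mpr ⟨hsub e₀ he₀, rfl⟩
    rw [Finset.sum_congr rfl key, Finset.sum_ite_eq' _ e₀ (fun _ => 1), if_pos hm]
  · apply Finset.sum_eq_zero
    intro e he
    rw [Finset.mem_filter] at he
    rw [if_neg]
    intro hez
    exact hv (he.2 ▸ List.mem_map_of_mem (f := pr) hez)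

lemma sum_out_eq (E : Finset (V × V)) (g : V × V → ℕ) (R : Finset V) :
    ∑ v ∈ R, ∑ e ∈ outEdges E v, g e = ∑ e ∈ E.filter (fun e => e.1 ∈ R), g e := by
  rw [show E.filter (fun e => e.1 ∈ R) = R.biUnion (outEdges E) by
    ext e
    simp only [Finset.mem_filter, Finset.mem_biUnion, outEdges]
    constructor
    · rintro ⟨he, h1⟩; exact ⟨e.1, h1, he, rfl⟩
    · rintro ⟨v, hv, he, rfl⟩; exact ⟨he, hv⟩]
  rw [Finset.sum_biUnion]
  intro a _ b _ hab
  simp only [Function.onFun, Finset.disjoint_left, outEdges, Finset.mem_filter]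
  rintro e ⟨_, h1⟩ ⟨_, h2⟩
  exact hab (h1 ▸ h2 ▸ rfl)

lemma sum_in_eq (E : Finset (V × V)) (g : V × V → ℕ) (R : Finset V) :
    ∑ v ∈ R, ∑ e ∈ inEdges E v, g e = ∑ e ∈ E.filter (fun e => e.2 ∈ R), g e := by
  rw [show E.filter (fun e => e.2 ∈ R) = R.biUnion (inEdges E) by
    ext e
    simp only [Finset.mem_filter, Finset.mem_biUnion, inEdges]
    constructor
    · rintro ⟨he, h1⟩; exact ⟨e.2, h1, he, rfl⟩
    · rintro ⟨v, hv, he, rfl⟩; exact ⟨he, hv⟩]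
  rw [Finset.sum_biUnion]
  intro a _ b _ hab
  simp only [Function.onFun, Finset.disjoint_left, inEdges, Finset.mem_filter]
  rintro e ⟨_, h1⟩ ⟨_, h2⟩
  exact hab (h1 ▸ h2 ▸ rfl)

lemma cut_reach (E : Finset (V × V)) (X Z : Finset V)
    (hX : ∀ e ∈ E, e.2 ∉ X)
    (g : V × V → ℕ)
    (hcons : ∀ v ∉ X, v ∉ Z → ∑ e ∈ inEdges E v, g e = ∑ e ∈ outEdges E v, g e)
    (x : V) (hxX : x ∈ X) (hxpos : 0 < ∑ e ∈ outEdges E x, g e) :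
    ∃ z ∈ Z, Relation.ReflTransGen (fun a b => (a, b) ∈ E ∧ 0 < g (a, b)) x z := by
  classical
  set r : V → V → Prop := fun a b => (a, b) ∈ E ∧ 0 < g (a, b) with hr
  by_contra hcon
  push_neg at hcon
  set R : Finset V := Finset.univ.filter (fun v => Relation.ReflTransGen r x v) with hR
  have hmemR : ∀ v, v ∈ R ↔ Relation.ReflTransGen r x v := by
    intro v; simp [hR]
  have hinX : ∀ v ∈ X, ∑ e ∈ inEdges E v, g e = 0 := by
    intro v hv
    apply Finset.sum_eq_zero
    intro e he
    rw [inEdges, Finset.mem_filter] at he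
    exact absurd (he.2 ▸ hv) (hX e he.1)
  have hlt : ∑ v ∈ R, ∑ e ∈ inEdges E v, g e < ∑ v ∈ R, ∑ e ∈ outEdges E v, g e := by
    apply Finset.sum_lt_sum
    · intro v hv
      by_cases hvX : v ∈ X
      · rw [hinX v hvX]; exact Nat.zero_le _
      · have hvZ : v ∉ Z := fun hz => hcon v hz ((hmemR v).mp hv)
        exact le_of_eq (hcons v hvX hvZ)
    · exact ⟨x, (hmemR x).mpr Relation.ReflTransGen.refl, by rw [hinX x hxX]; exact hxpos⟩
  have hle : ∑ v ∈ R, ∑ e ∈ outEdges E v, g e ≤ ∑ v ∈ R, ∑ e ∈ inEdges E v, g e := by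
    rw [sum_out_eq, sum_in_eq]
    rw [← Finset.sum_filter_ne_zero (E.filter (fun e => e.1 ∈ R))]
    apply Finset.sum_le_sum_of_subset
    intro e he
    simp only [Finset.mem_filter] at he ⊢
    obtain ⟨⟨heE, h1R⟩, hg0⟩ := he
    refine ⟨heE, ?_⟩
    rw [hmemR] at h1R ⊢
    exact h1R.tail ⟨(by simpa using heE), Nat.pos_of_ne_zero hg0⟩
  omega

lemma nat_decomp (E : Finset (V × V)) (X Z : Finset V) (hXZ : Disjoint X Z)
    (hX : ∀ e ∈ E, e.2 ∉ X) (hZ : ∀ e ∈ E, e.1 ∉ Z) :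
    ∀ (M : ℕ) (g : V × V → ℕ), (∀ e ∉ E, g e = 0) →
    (∀ v ∉ X, v ∉ Z → ∑ e ∈ inEdges E v, g e = ∑ e ∈ outEdges E v, g e) →
    (∑ x ∈ X, ∑ e ∈ outEdges E x, g e) = M →
    ∃ h : Fin M → V × V → ℝ,
      (∀ i, IsUnitPathFlow E X Z (h i)) ∧
      (∀ e, (∑ i, h i e) ≤ (g e : ℝ)) := by
  intro M
  induction M with
  | zero =>
    intro g _ _ _
    exact ⟨fun i => i.elim0, fun i => i.elim0, fun e => by simp⟩
  | succ M ih =>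
    intro g hsupp hcons hval
    obtain ⟨x, hxX, hxpos⟩ : ∃ x ∈ X, 0 < ∑ e ∈ outEdges E x, g e := by
      by_contra hc
      push_neg at hc
      simp only [Nat.le_zero] at hc
      rw [Finset.sum_eq_zero hc] at hval
      omega
    obtain ⟨z, hzZ, hreach⟩ := cut_reach E X Z hX g hcons x hxX hxpos
    obtain ⟨l₀, hch, hlast⟩ := List.exists_isChain_cons_of_relationReflTransGen hreach
    have hch' : List.Chain' (fun a b => (a, b) ∈ E ∧ 0 < g (a, b)) (x :: l₀) := hch
    obtain ⟨l, hchain, hnd, hhead, hlastq⟩ :=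
      aux_shortcut _ (x :: l₀).length (x :: l₀) le_rfl hch'
    have hne : l ≠ [] := by
      intro h; rw [h] at hhead; simp at hhead
    have hheadl : l.head hne = x := by
      rw [List.head?_eq_head hne] at hhead
      simpa using hhead
    have hlastl : l.getLast hne = z := by
      rw [List.getLast?_eq_getLast hne,
        List.getLast?_eq_getLast (by simp : (x :: l₀) ≠ [])] at hlastq
      simpa [hlast] using hlastq
    have hxZ : x ∉ Z := fun h => (Finset.disjoint_left.mp hXZ hxX) h
    set zp := l.zip l.tail with hzp
    have hzpE : ∀ e ∈ zp, e ∈ E := fun e he => (chain'_zip_tail hchain e he).1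
    have hzppos : ∀ e ∈ zp, 0 < g e := fun e he => by
      have h2 := (chain'_zip_tail hchain e he).2
      simpa using h2
    set hp : V × V → ℕ := fun e => if e ∈ zp then 1 else 0 with hhp
    have hple : ∀ e, hp e ≤ g e := by
      intro e; simp only [hhp]
      split_ifs with h
      · exact hzppos e h
      · exact Nat.zero_le _
    have hmapsnd : zp.map Prod.snd = l.tail := map_snd_zip_tail l
    have hmapfst : zp.map Prod.fst = l.dropLast := map_fst_zip_tail l
    have hndt : l.tail.Nodup := (List.tail_sublist l).nodup hnd
    have hnddl : l.dropLast.Nodup := (List.dropLast_sublist l).nodup hnd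
    have hinsum : ∀ v, ∑ e ∈ inEdges E v, hp e = if v ∈ l.tail then 1 else 0 := by
      intro v
      have h := indicator_sum_core E zp Prod.snd (by rw [hmapsnd]; exact hndt) hzpE v
      rw [hmapsnd] at h
      exact h
    have houtsum : ∀ v, ∑ e ∈ outEdges E v, hp e = if v ∈ l.dropLast then 1 else 0 := by
      intro v
      have h := indicator_sum_core E zp Prod.fst (by rw [hmapfst]; exact hnddl) hzpE v
      rw [hmapfst] at h
      exact h
    have hmem1 : ∀ v, v ∈ l ↔ v = x ∨ v ∈ l.tail := by
      intro v
      conv_lhs => rw [← List.cons_head_tail hne]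
      rw [List.mem_cons, hheadl]
    have hmem2 : ∀ v, v ∈ l ↔ v ∈ l.dropLast ∨ v = z := by
      intro v
      conv_lhs => rw [← List.dropLast_append_getLast hne]
      simp [hlastl]
    have htailX : ∀ v ∈ l.tail, v ∉ X := by
      intro v hv
      rw [← hmapsnd] at hv
      obtain ⟨e, he, rfl⟩ := List.mem_map.mp hv
      exact hX e (hzpE e he)
    have hxdl : x ∈ l.dropLast := by
      rcases (hmem2 x).mp ((hmem1 x).mpr (Or.inl rfl)) with h | rfl
      · exact h
      · exact absurd hzZ hxZ
    have hpcons : ∀ v, v ∉ X → v ∉ Z →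
        ∑ e ∈ inEdges E v, hp e = ∑ e ∈ outEdges E v, hp e := by
      intro v hvX hvZ
      have hiff : v ∈ l.tail ↔ v ∈ l.dropLast := by
        constructor
        · intro hv
          rcases (hmem2 v).mp ((hmem1 v).mpr (Or.inr hv)) with h | rfl
          · exact h
          · exact absurd hzZ hvZ
        · intro hv
          rcases (hmem1 v).mp ((hmem2 v).mpr (Or.inl hv)) with rfl | h
          · exact absurd hxX hvX
          · exact h
      rw [hinsum, houtsum]
      simp only [hiff]
    have hpval : ∑ x' ∈ X, ∑ e ∈ outEdges E x', hp e = 1 := by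
      have hcong : ∀ x' ∈ X, (∑ e ∈ outEdges E x', hp e) = if x' = x then 1 else 0 := by
        intro x' hx'
        rw [houtsum]
        have hiff : x' ∈ l.dropLast ↔ x' = x := by
          constructor
          · intro hv
            rcases (hmem1 x').mp ((hmem2 x').mpr (Or.inl hv)) with h | h
            · exact h
            · exact absurd hx' (htailX x' h)
          · rintro rfl; exact hxdl
        simp only [hiff]
      rw [Finset.sum_congr rfl hcong, Finset.sum_ite_eq' X x (fun _ => 1), if_pos hxX]
    set g' : V × V → ℕ := fun e => g e - hp e with hg'
    have hsum : ∀ e, g' e + hp e = g e := fun e => Nat.sub_add_cancel (hple e)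
    have hsupp' : ∀ e ∉ E, g' e = 0 := by
      intro e he
      have h1 : g e = 0 := hsupp e he
      simp only [hg']
      omega
    have hsplit : ∀ s : Finset (V × V), ∑ e ∈ s, g e = ∑ e ∈ s, g' e + ∑ e ∈ s, hp e := by
      intro s
      rw [← Finset.sum_add_distrib]
      exact Finset.sum_congr rfl (fun e _ => (hsum e).symm)
    have hcons' : ∀ v ∉ X, v ∉ Z →
        ∑ e ∈ inEdges E v, g' e = ∑ e ∈ outEdges E v, g' e := by
      intro v hvX hvZ
      have h1 := hcons v hvX hvZ
      have h2 := hpcons v hvX hvZ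
      rw [hsplit, hsplit] at h1
      omega
    have hval' : ∑ x' ∈ X, ∑ e ∈ outEdges E x', g' e = M := by
      have h3 : ∑ x' ∈ X, ∑ e ∈ outEdges E x', g e
          = ∑ x' ∈ X, ∑ e ∈ outEdges E x', g' e + ∑ x' ∈ X, ∑ e ∈ outEdges E x', hp e := by
        rw [← Finset.sum_add_distrib]
        exact Finset.sum_congr rfl (fun x' _ => hsplit _)
      omega
    obtain ⟨h', hh'unit, hh'le⟩ := ih g' hsupp' hcons' hval'
    set hR : V × V → ℝ := fun e => (hp e : ℝ) with hhR
    have hunit : IsUnitPathFlow E X Z hR := by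
      refine ⟨⟨⟨?_, ?_, ?_⟩, l, ⟨hne, ?_, ?_, hnd, ?_⟩, ?_, ?_⟩, ?_⟩
      · intro e _; exact Nat.cast_nonneg _
      · intro e he
        have h0 : hp e = 0 := by
          simp only [hhp]
          rw [if_neg]
          intro hz; exact he (hzpE e hz)
        simp [hhR, h0]
      · intro v hvX hvZ
        simp only [hhR]
        rw [← Nat.cast_sum, ← Nat.cast_sum]
        exact_mod_cast hpcons v hvX hvZ
      · rw [hheadl]; exact hxX
      · rw [hlastl]; exact hzZ
      · exact hchain.imp (fun a b hab => hab.1)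
      · intro e he
        simp [hhR, hhp, hzp, he]
      · intro e he
        simp [hhR, hhp, hzp, he]
      · show (∑ x' ∈ X, ∑ e ∈ outEdges E x', hR e) = 1
        simp only [hhR]
        rw [show (∑ x' ∈ X, ∑ e ∈ outEdges E x', ((hp e : ℝ)))
            = ((∑ x' ∈ X, ∑ e ∈ outEdges E x', hp e : ℕ) : ℝ) by push_cast; ring]
        rw [hpval]; norm_num
    refine ⟨Fin.cons hR h', ?_, ?_⟩
    · intro i
      induction i using Fin.cases with
      | zero => simpa using hunit
      | succ j => simpa using hh'unit j
    · intro e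
      have hpt : ∀ i : Fin (M + 1),
          Fin.cons (α := fun _ => V × V → ℝ) hR h' i e = Fin.cons (α := fun _ => ℝ) (hR e) (fun j => h' j e) i := by
        intro i
        induction i using Fin.cases with
        | zero => simp
        | succ j => simp
      rw [Finset.sum_congr rfl (fun i _ => hpt i), Fin.sum_cons]
      have h4 := hh'le e
      have h5 : (hp e : ℝ) + (g' e : ℝ) = (g e : ℝ) := by
        rw [← Nat.cast_add, add_comm (hp e), hsum e]
      calc hR e + ∑ i, h' i e ≤ (hp e : ℝ) + (g' e : ℝ) := add_le_add le_rfl h4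
        _ = (g e : ℝ) := h5

theorem stmt13 (E : Finset (V × V)) (X Z : Finset V) (hXZ : Disjoint X Z)
    (hX : ∀ e ∈ E, e.2 ∉ X) (hZ : ∀ e ∈ E, e.1 ∉ Z)
    (f : V × V → ℝ) (hf : IsFlow E X Z f) (hint : ∀ e, ∃ n : ℕ, f e = n) :
    ∃ (N : ℕ) (g : Fin N → V × V → ℝ),
      (N : ℝ) = flowValue E X f ∧
      (∀ i, IsUnitPathFlow E X Z (g i)) ∧
      (∀ i, ∀ e, g i e ≤ f e) ∧
      (∀ e, (∑ i, g i e) ≤ f e) := by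
  classical
  choose gnat hfg using hint
  obtain ⟨hnn, hzero, hconsR⟩ := hf
  have hsupp : ∀ e ∉ E, gnat e = 0 := by
    intro e he
    have h := hzero e he
    rw [hfg e] at h
    exact_mod_cast h
  have hcons : ∀ v ∉ X, v ∉ Z →
      ∑ e ∈ inEdges E v, gnat e = ∑ e ∈ outEdges E v, gnat e := by
    intro v hvX hvZ
    have h := hconsR v hvX hvZ
    have h2 : ((∑ e ∈ inEdges E v, gnat e : ℕ) : ℝ)
        = ((∑ e ∈ outEdges E v, gnat e : ℕ) : ℝ) := by
      rw [Nat.cast_sum, Nat.cast_sum]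
      simpa [hfg] using h
    exact_mod_cast h2
  set M := ∑ x ∈ X, ∑ e ∈ outEdges E x, gnat e with hM
  obtain ⟨h, hunit, hle⟩ := nat_decomp E X Z hXZ hX hZ M gnat hsupp hcons rfl
  refine ⟨M, h, ?_, hunit, ?_, ?_⟩
  · show (M : ℝ) = ∑ x ∈ X, ∑ e ∈ outEdges E x, f e
    rw [hM]
    push_cast
    exact Finset.sum_congr rfl (fun x _ => Finset.sum_congr rfl (fun e _ => (hfg e).symm))
  · intro i e
    have hnn_i : ∀ j : Fin M, 0 ≤ h j e := by
      intro j
      obtain ⟨⟨⟨hn, hz, _⟩, _⟩, _⟩ := hunit j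
      by_cases he : e ∈ E
      · exact hn e he
      · exact le_of_eq (hz e he).symm
    calc h i e ≤ ∑ j, h j e :=
          Finset.single_le_sum (fun j _ => hnn_i j) (Finset.mem_univ i)
      _ ≤ (gnat e : ℝ) := hle e
      _ = f e := (hfg e).symm
  · intro e
    rw [hfg e]
    exact hle e
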